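/- For every positive integer n and every ε > 0 there exists δ > 0 (depending only on n and ε) with the following property: if H is an infinite-dimensional separable complex Hilbert space and T₁,…,T_n ∈ B(H) are self-adjoint with ‖T_j‖ ≤ 1 (1 ≤ j ≤ n) and ‖T_iT_j − T_jT_i‖ < δ for all 1 ≤ i,j ≤ n, then for every λ = (λ₁,…,λ_n) ∈ sSp^{ε/4}((T₁,…,T_n)) (taken with M = 1) there exists a unit vector v ∈ H such that max_{1≤i≤n} |exp_{T_i}(v) − λ_i| < ε and max_{1≤i≤n} sd_{T_i}(v) < ε. -/

import Mathlib

open scoped ComplexOrder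

noncomputable def theta (lam eta : ℝ) : ℝ → ℝ :=
  fun t => max 0 (min 1 ((eta - |t - lam|) / (eta / 4)))

/-- `Θ_{ξ,η}(a₁,…,a_n)`: ordered product of `θ_{ξᵢ,η}(aᵢ)` (continuous functional calculus). -/
noncomputable def ThetaProd {A : Type*} [CStarAlgebra A] {n : ℕ}
    (xi : Fin n → ℝ) (eta : ℝ) (a : Fin n → A) : A :=
  (List.ofFn (fun i => cfc (theta (xi i) eta) (a i))).prod

/-- The grid size `k`: the smallest positive integer with `(M+1)/k < η/(2√n)`. -/
noncomputable def gridSize (n : ℕ) (M eta : ℝ) : ℕ :=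
  sInf {k : ℕ | 0 < k ∧ (M + 1) / (k : ℝ) < eta / (2 * Real.sqrt n)}

/-- The grid `D^η ⊆ ℝⁿ`. -/
def grid (n : ℕ) (M eta : ℝ) : Set (EuclideanSpace ℝ (Fin n)) :=
  {x | ∃ m : Fin n → ℤ, (∀ i, x i = (m i : ℝ) / (gridSize n M eta)) ∧
        ∀ i, |(m i : ℝ)| ≤ M * (gridSize n M eta)}

/-- The `η`-synthetic spectrum of an `n`-tuple of self-adjoint elements. -/
noncomputable def sSp {A : Type*} [CStarAlgebra A] (n : ℕ) (M eta : ℝ)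
    (a : Fin n → A) : Set (EuclideanSpace ℝ (Fin n)) :=
  ⋃ x ∈ {x ∈ grid n M eta | 1 - eta ≤ ‖ThetaProd x eta a‖}, Metric.closedBall x eta

noncomputable def expVal {H : Type*} [NormedAddCommGroup H] [InnerProductSpace ℂ H]
    (T : H →L[ℂ] H) (v : H) : ℝ :=
  RCLike.re (inner ℂ (T v) v : ℂ)

noncomputable def sd {H : Type*} [NormedAddCommGroup H] [InnerProductSpace ℂ H]
    (T : H →L[ℂ] H) (v : H) : ℝ :=
  ‖T v - expVal T v • v‖


open Polynomial

set_option linter.unusedSectionVars false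
set_option linter.unusedVariables false


section PolyComm
variable {A : Type*} [NormedRing A] [NormedAlgebra ℝ A]

lemma pow_comm_bound (R B : A) (hR : ‖R‖ ≤ 3) :
    ∀ k : ℕ, ‖R ^ k * B - B * R ^ k‖ ≤ (k : ℝ) * 3 ^ k * ‖R * B - B * R‖ := by
  intro k
  induction k with
  | zero => simp
  | succ k ih =>
    have key : R ^ (k+1) * B - B * R ^ (k+1)
        = R * (R ^ k * B - B * R ^ k) + (R * B - B * R) * R ^ k := by
      rw [pow_succ']; noncomm_ring
    have h1 : ‖R * (R ^ k * B - B * R ^ k)‖ ≤ 3 * ((k : ℝ) * 3 ^ k * ‖R * B - B * R‖) := by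
      calc ‖R * (R ^ k * B - B * R ^ k)‖ ≤ ‖R‖ * ‖R ^ k * B - B * R ^ k‖ := norm_mul_le _ _
        _ ≤ 3 * ((k : ℝ) * 3 ^ k * ‖R * B - B * R‖) := by
            apply mul_le_mul hR ih (norm_nonneg _) (by norm_num)
    have h2 : ‖(R * B - B * R) * R ^ k‖ ≤ ‖R * B - B * R‖ * 3 ^ k := by
      rcases Nat.eq_zero_or_pos k with hk | hk
      · subst hk; simp
      calc ‖(R * B - B * R) * R ^ k‖ ≤ ‖R * B - B * R‖ * ‖R ^ k‖ := norm_mul_le _ _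
        _ ≤ ‖R * B - B * R‖ * 3 ^ k := by
            apply mul_le_mul_of_nonneg_left _ (norm_nonneg _)
            calc ‖R ^ k‖ ≤ ‖R‖ ^ k := norm_pow_le' _ hk
              _ ≤ 3 ^ k := pow_le_pow_left₀ (norm_nonneg _) hR k
    calc ‖R ^ (k+1) * B - B * R ^ (k+1)‖ ≤ _ := by rw [key]; exact norm_add_le _ _
      _ ≤ 3 * ((k : ℝ) * 3 ^ k * ‖R * B - B * R‖) + ‖R * B - B * R‖ * 3 ^ k :=
          add_le_add h1 h2
      _ ≤ ((k : ℝ) + 1) * 3 ^ (k + 1) * ‖R * B - B * R‖ := by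
          rw [pow_succ]; nlinarith [norm_nonneg (R * B - B * R), pow_pos (show (0:ℝ) < 3 by norm_num) k]
      _ = ((k + 1 : ℕ) : ℝ) * 3 ^ (k + 1) * ‖R * B - B * R‖ := by push_cast; ring

end PolyComm

lemma aeval_comm_bound (q : ℝ[X]) : ∃ C : ℝ, 0 ≤ C ∧
    ∀ (A : Type) (_ : NormedRing A) (_ : NormedAlgebra ℝ A) (R B : A), ‖R‖ ≤ 3 →
      ‖(aeval R q) * B - B * (aeval R q)‖ ≤ C * ‖R * B - B * R‖ := by
  induction q using Polynomial.induction_on' with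
  | add p r hp hr =>
    obtain ⟨C1, hC1, h1⟩ := hp
    obtain ⟨C2, hC2, h2⟩ := hr
    refine ⟨C1 + C2, by positivity, ?_⟩
    intro A _ _ R B hR
    have key : aeval R (p + r) * B - B * aeval R (p + r)
        = (aeval R p * B - B * aeval R p) + (aeval R r * B - B * aeval R r) := by
      rw [map_add]; noncomm_ring
    rw [key, add_mul]
    exact (norm_add_le _ _).trans (add_le_add (h1 _ _ _ _ _ hR) (h2 _ _ _ _ _ hR))
  | monomial k c =>
    refine ⟨|c| * ((k : ℝ) * 3 ^ k), by positivity, ?_⟩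
    intro A _ _ R B hR
    have h1 : aeval R (monomial k c) = c • R ^ k := by
      rw [aeval_monomial, Algebra.smul_def]
    have key : aeval R (monomial k c) * B - B * aeval R (monomial k c)
        = c • (R ^ k * B - B * R ^ k) := by
      rw [h1, smul_mul_assoc, mul_smul_comm, smul_sub]
    rw [key, norm_smul, Real.norm_eq_abs, mul_assoc]
    exact mul_le_mul_of_nonneg_left (pow_comm_bound R B hR k) (abs_nonneg c)


lemma theta_nonneg (lam eta t : ℝ) : 0 ≤ theta lam eta t := le_max_left _ _

lemma theta_le_one (lam eta t : ℝ) : theta lam eta t ≤ 1 := by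
  unfold theta
  rcases le_total ((eta - |t - lam|) / (eta / 4)) 1 with h | h
  · exact max_le zero_le_one (min_le_left _ _)
  · simp [min_eq_left h]

lemma theta_abs_le (lam eta t : ℝ) : |theta lam eta t| ≤ 1 := by
  rw [abs_of_nonneg (theta_nonneg _ _ _)]; exact theta_le_one _ _ _

lemma theta_eq_zero {lam eta t : ℝ} (heta : 0 < eta) (h : eta ≤ |t - lam|) :
    theta lam eta t = 0 := by
  unfold theta
  have h1 : (eta - |t - lam|) / (eta / 4) ≤ 0 :=
    div_nonpos_of_nonpos_of_nonneg (by linarith) (by linarith)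
  rw [max_eq_left ((min_le_right _ _).trans h1)]

lemma theta_eq_one {lam eta t : ℝ} (heta : 0 < eta) (h : |t - lam| ≤ 3 * eta / 4) :
    theta lam eta t = 1 := by
  unfold theta
  have h1 : (1 : ℝ) ≤ (eta - |t - lam|) / (eta / 4) := by
    rw [le_div_iff₀ (by linarith)]; linarith
  rw [min_eq_left h1, max_eq_right zero_le_one]

lemma theta_shift (lam eta t : ℝ) : theta lam eta t = theta 0 eta (t - lam) := by
  unfold theta; rw [sub_zero]

lemma theta_continuous (lam eta : ℝ) : Continuous (theta lam eta) := by
  unfold theta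
  exact continuous_const.max (continuous_const.min
    (((continuous_const.sub ((continuous_id.sub continuous_const).abs))).div_const _))

lemma theta_absorb {lam eta : ℝ} (heta : 0 < eta) (t : ℝ) :
    theta lam (4 * eta / 3) t * theta lam eta t = theta lam eta t := by
  rcases lt_or_ge |t - lam| eta with h | h
  · rw [theta_eq_one (by linarith) (by linarith)]; ring
  · rw [theta_eq_zero heta h]; ring

lemma theta_mul_dist_le {lam eta : ℝ} (heta : 0 < eta) (t : ℝ) :
    |(t - lam) * theta lam eta t| ≤ eta := by
  rcases le_total |t - lam| eta with h | h
  · rw [abs_mul]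
    calc |t - lam| * |theta lam eta t| ≤ eta * 1 :=
      mul_le_mul h (theta_abs_le _ _ _) (abs_nonneg _) (le_of_lt heta)
    _ = eta := mul_one _
  · rw [theta_eq_zero heta h]; simp [le_of_lt heta]

section ListLemmas
variable {A : Type*} [NormedRing A]

lemma list_prod_norm_le_one (h1 : ‖(1 : A)‖ ≤ 1) :
    ∀ (l : List A), (∀ x ∈ l, ‖x‖ ≤ 1) → ‖l.prod‖ ≤ 1 := by
  intro l
  induction l with
  | nil => intro _; simpa using h1
  | cons x t ih =>
    intro h
    rw [List.prod_cons]
    calc ‖x * t.prod‖ ≤ ‖x‖ * ‖t.prod‖ := norm_mul_le _ _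
      _ ≤ 1 * 1 := mul_le_mul (h x List.mem_cons_self)
            (ih fun y hy => h y (List.mem_cons_of_mem _ hy)) (norm_nonneg _) zero_le_one
      _ = 1 := mul_one _

lemma list_absorb (h1 : ‖(1 : A)‖ ≤ 1) (φ : A) {γ : ℝ} (hγ : 0 ≤ γ) :
    ∀ (l : List A), (∀ x ∈ l, ‖x‖ ≤ 1) → (∀ x ∈ l, ‖φ * x - x * φ‖ ≤ γ) →
      (∃ x ∈ l, φ * x = x) → ‖φ * l.prod - l.prod‖ ≤ l.length * γ := by
  intro l
  induction l with
  | nil => rintro _ _ ⟨x, hx, -⟩; exact absurd hx List.not_mem_nil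
  | cons x t ih =>
    rintro hb hc ⟨y, hy, hyabs⟩
    rw [List.prod_cons]
    by_cases hx : φ * x = x
    · rw [← mul_assoc, hx, sub_self, norm_zero]
      positivity
    · have hyt : y ∈ t := by
        rcases List.mem_cons.mp hy with rfl | h
        · exact absurd hyabs hx
        · exact h
      have key : φ * (x * t.prod) - x * t.prod
          = (φ * x - x * φ) * t.prod + x * (φ * t.prod - t.prod) := by noncomm_ring
      have hbt : ∀ z ∈ t, ‖z‖ ≤ 1 := fun z hz => hb z (List.mem_cons_of_mem _ hz)
      have ih' := ih hbt (fun z hz => hc z (List.mem_cons_of_mem _ hz)) ⟨y, hyt, hyabs⟩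
      calc ‖φ * (x * t.prod) - x * t.prod‖
          ≤ ‖(φ * x - x * φ) * t.prod‖ + ‖x * (φ * t.prod - t.prod)‖ := by
            rw [key]; exact norm_add_le _ _
        _ ≤ γ * 1 + 1 * (t.length * γ) := by
            apply add_le_add
            · exact (norm_mul_le _ _).trans (mul_le_mul (hc x List.mem_cons_self)
                (list_prod_norm_le_one h1 t hbt) (norm_nonneg _) hγ)
            · exact (norm_mul_le _ _).trans (mul_le_mul (hb x List.mem_cons_self) ih'
                (norm_nonneg _) zero_le_one)
        _ = (x :: t).length * γ := by simp; ring
end ListLemmas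

section CfcLemmas
variable {A : Type*} [CStarAlgebra A]

lemma spec_abs_le [NormOneClass A] {a : A} (h : ‖a‖ ≤ 1) {t : ℝ} (ht : t ∈ spectrum ℝ a) : |t| ≤ 1 := by
  have h2 := spectrum.norm_le_norm_of_mem (𝕜 := ℝ) ht
  rw [Real.norm_eq_abs] at h2
  exact h2.trans h

lemma norm_cfc_theta_le_one (lam eta : ℝ) (a : A) : ‖cfc (theta lam eta) a‖ ≤ 1 :=
  norm_cfc_le zero_le_one fun t _ => by rw [Real.norm_eq_abs]; exact theta_abs_le _ _ _

lemma cfc_shifted_poly (q : ℝ[X]) (x : ℝ) (a : A) (ha : IsSelfAdjoint a) :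
    cfc (fun t => q.eval (t - x)) a = aeval (a - algebraMap ℝ A x) q := by
  have h1 : (fun t : ℝ => q.eval (t - x)) = (q.comp (X - C x)).eval := by
    funext t; simp [eval_comp]
  rw [h1, cfc_polynomial (q.comp (X - C x)) a, aeval_comp]
  simp

lemma cfc_theta_near_poly [NormOneClass A] {q : ℝ[X]} {eta ρ : ℝ} (hρ : 0 ≤ ρ)
    (hq : ∀ s ∈ Set.Icc (-3:ℝ) 3, |q.eval s - theta 0 eta s| ≤ ρ)
    {x : ℝ} (hx : |x| ≤ 2) {a : A} (ha : IsSelfAdjoint a) (hna : ‖a‖ ≤ 1) :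
    ‖cfc (theta x eta) a - aeval (a - algebraMap ℝ A x) q‖ ≤ ρ := by
  rw [← cfc_shifted_poly q x a ha,
    ← cfc_sub (theta x eta) (fun t => q.eval (t - x)) a
      ((theta_continuous x eta).continuousOn)
      ((q.continuous.comp (continuous_id.sub continuous_const)).continuousOn)]
  apply norm_cfc_le hρ
  intro t ht
  have h1 : |t| ≤ 1 := spec_abs_le hna ht
  rw [Real.norm_eq_abs, theta_shift]
  have h2 : t - x ∈ Set.Icc (-3:ℝ) 3 := by
    rw [abs_le] at h1 hx
    constructor <;> [linarith [h1.1, hx.2]; linarith [h1.2, hx.1]]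
  have := hq (t - x) h2
  rw [abs_sub_comm] at this
  exact this

lemma cfc_theta_absorb {eta : ℝ} (heta : 0 < eta) (x : ℝ) (a : A) (ha : IsSelfAdjoint a) :
    cfc (theta x (4 * eta / 3)) a * cfc (theta x eta) a = cfc (theta x eta) a := by
  rw [← cfc_mul _ _ a ((theta_continuous _ _).continuousOn) ((theta_continuous _ _).continuousOn)]
  exact cfc_congr fun t _ => theta_absorb heta t

lemma cfc_dist_theta_le {eta : ℝ} (heta : 0 < eta) (x : ℝ) (a : A) (ha : IsSelfAdjoint a) :
    ‖(a - algebraMap ℝ A x) * cfc (theta x eta) a‖ ≤ eta := by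
  have h1 : a - algebraMap ℝ A x = cfc (fun t : ℝ => t - x) a := by
    rw [cfc_sub (fun t : ℝ => t) (fun _ => x) a continuousOn_id continuousOn_const,
      cfc_id' ℝ a, cfc_const x a]
  have hm := cfc_mul (R := ℝ) (fun t : ℝ => t - x) (theta x eta) a
    ((continuous_id.sub continuous_const).continuousOn) ((theta_continuous _ _).continuousOn)
  rw [h1, ← hm]
  exact norm_cfc_le heta.le fun t _ => by rw [Real.norm_eq_abs]; exact theta_mul_dist_le heta t

lemma sub_algebraMap_comm (a B : A) (x : ℝ) :
    (a - algebraMap ℝ A x) * B - B * (a - algebraMap ℝ A x) = a * B - B * a := by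
  simp only [sub_mul, mul_sub]
  rw [Algebra.commutes x B]
  abel

lemma theta_comm_bound [NormOneClass A] {eta1 eta2 ρ C1 C2 : ℝ} (hρ : 0 < ρ) (hρ1 : ρ ≤ 1)
    {q1 q2 : ℝ[X]}
    (hq1 : ∀ s ∈ Set.Icc (-3:ℝ) 3, |q1.eval s - theta 0 eta1 s| ≤ ρ)
    (hq2 : ∀ s ∈ Set.Icc (-3:ℝ) 3, |q2.eval s - theta 0 eta2 s| ≤ ρ)
    (hC1 : 0 ≤ C1) (hC2 : 0 ≤ C2)
    (hc1 : ∀ (R B : A), ‖R‖ ≤ 3 → ‖aeval R q1 * B - B * aeval R q1‖ ≤ C1 * ‖R * B - B * R‖)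
    (hc2 : ∀ (R B : A), ‖R‖ ≤ 3 → ‖aeval R q2 * B - B * aeval R q2‖ ≤ C2 * ‖R * B - B * R‖)
    {x y : ℝ} (hx : |x| ≤ 2) (hy : |y| ≤ 2)
    {a b : A} (ha : IsSelfAdjoint a) (hb : IsSelfAdjoint b) (hna : ‖a‖ ≤ 1) (hnb : ‖b‖ ≤ 1) :
    ‖cfc (theta x eta1) a * cfc (theta y eta2) b - cfc (theta y eta2) b * cfc (theta x eta1) a‖
      ≤ C1 * C2 * ‖a * b - b * a‖ + 10 * ρ := by
  set P := cfc (theta x eta1) a with hP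
  set Q := cfc (theta y eta2) b with hQ
  set R1 := a - algebraMap ℝ A x with hR1
  set R2 := b - algebraMap ℝ A y with hR2
  set A1 := aeval R1 q1 with hA1
  set A2 := aeval R2 q2 with hA2
  have hnR1 : ‖R1‖ ≤ 3 := by
    calc ‖R1‖ ≤ ‖a‖ + ‖algebraMap ℝ A x‖ := norm_sub_le _ _
      _ ≤ 1 + 2 := by
          apply add_le_add hna
          rw [norm_algebraMap', Real.norm_eq_abs]; exact hx
      _ = 3 := by norm_num
  have hnR2 : ‖R2‖ ≤ 3 := by
    calc ‖R2‖ ≤ ‖b‖ + ‖algebraMap ℝ A y‖ := norm_sub_le _ _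
      _ ≤ 1 + 2 := by
          apply add_le_add hnb
          rw [norm_algebraMap', Real.norm_eq_abs]; exact hy
      _ = 3 := by norm_num
  have hE1 : ‖P - A1‖ ≤ ρ := cfc_theta_near_poly hρ.le hq1 hx ha hna
  have hE2 : ‖Q - A2‖ ≤ ρ := cfc_theta_near_poly hρ.le hq2 hy hb hnb
  have hnP : ‖P‖ ≤ 1 := norm_cfc_theta_le_one _ _ _
  have hnQ : ‖Q‖ ≤ 1 := norm_cfc_theta_le_one _ _ _
  have hnA1 : ‖A1‖ ≤ 2 := by
    calc ‖A1‖ = ‖P - (P - A1)‖ := by rw [sub_sub_cancel]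
      _ ≤ ‖P‖ + ‖P - A1‖ := norm_sub_le _ _
      _ ≤ 1 + 1 := add_le_add hnP (hE1.trans hρ1)
      _ = 2 := by norm_num
  have hnA2 : ‖A2‖ ≤ 2 := by
    calc ‖A2‖ = ‖Q - (Q - A2)‖ := by rw [sub_sub_cancel]
      _ ≤ ‖Q‖ + ‖Q - A2‖ := norm_sub_le _ _
      _ ≤ 1 + 1 := add_le_add hnQ (hE2.trans hρ1)
      _ = 2 := by norm_num
  -- main commutator of the polynomial parts
  have hAA : ‖A1 * A2 - A2 * A1‖ ≤ C1 * C2 * ‖a * b - b * a‖ := by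
    have step1 : ‖A1 * A2 - A2 * A1‖ ≤ C1 * ‖R1 * A2 - A2 * R1‖ := hc1 R1 A2 hnR1
    have step2 : ‖A2 * R1 - R1 * A2‖ ≤ C2 * ‖R2 * R1 - R1 * R2‖ := hc2 R2 R1 hnR2
    have e1 : ‖R1 * A2 - A2 * R1‖ = ‖A2 * R1 - R1 * A2‖ := norm_sub_rev _ _
    have e2 : R2 * R1 - R1 * R2 = b * R1 - R1 * b := sub_algebraMap_comm b R1 y
    have e3 : b * R1 - R1 * b = -(R1 * b - b * R1) := by abel
    have e4 : R1 * b - b * R1 = a * b - b * a := sub_algebraMap_comm a b x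
    calc ‖A1 * A2 - A2 * A1‖ ≤ C1 * ‖R1 * A2 - A2 * R1‖ := step1
      _ = C1 * ‖A2 * R1 - R1 * A2‖ := by rw [e1]
      _ ≤ C1 * (C2 * ‖R2 * R1 - R1 * R2‖) := by
          exact mul_le_mul_of_nonneg_left step2 hC1
      _ = C1 * C2 * ‖a * b - b * a‖ := by
          rw [e2, e3, norm_neg, e4, mul_assoc]
  have key : P * Q - Q * P = (A1 * A2 - A2 * A1) + ((A1 * (Q - A2) - (Q - A2) * A1)
      + ((P - A1) * A2 - A2 * (P - A1)) + ((P - A1) * (Q - A2) - (Q - A2) * (P - A1))) := by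
    noncomm_ring
  have comm_bound : ∀ (X Y : A) (cx cy : ℝ), 0 ≤ cx → 0 ≤ cy → ‖X‖ ≤ cx → ‖Y‖ ≤ cy →
      ‖X * Y - Y * X‖ ≤ 2 * (cx * cy) := by
    intro X Y cx cy hcx hcy hX hY
    calc ‖X * Y - Y * X‖ ≤ ‖X * Y‖ + ‖Y * X‖ := norm_sub_le _ _
      _ ≤ ‖X‖ * ‖Y‖ + ‖Y‖ * ‖X‖ := add_le_add (norm_mul_le _ _) (norm_mul_le _ _)
      _ ≤ cx * cy + cy * cx := add_le_add
          (mul_le_mul hX hY (norm_nonneg _) hcx) (mul_le_mul hY hX (norm_nonneg _) hcy)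
      _ = 2 * (cx * cy) := by ring
  calc ‖P * Q - Q * P‖
      ≤ ‖A1 * A2 - A2 * A1‖ + (‖A1 * (Q - A2) - (Q - A2) * A1‖
        + ‖(P - A1) * A2 - A2 * (P - A1)‖ + ‖(P - A1) * (Q - A2) - (Q - A2) * (P - A1)‖) := by
        rw [key]
        exact (norm_add_le _ _).trans (by gcongr; exact (norm_add_le _ _).trans (by gcongr; exact norm_add_le _ _))
    _ ≤ C1 * C2 * ‖a * b - b * a‖ + (2 * (2 * ρ) + 2 * (ρ * 2) + 2 * (ρ * ρ)) := by
        apply add_le_add hAA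
        apply add_le_add (add_le_add ?_ ?_) ?_
        · exact comm_bound _ _ 2 ρ (by norm_num) hρ.le hnA1 hE2
        · exact comm_bound _ _ ρ 2 hρ.le (by norm_num) hE1 hnA2
        · exact comm_bound _ _ ρ ρ hρ.le hρ.le hE1 hE2
    _ ≤ C1 * C2 * ‖a * b - b * a‖ + 10 * ρ := by nlinarith
end CfcLemmas

-- H-level helpers

lemma coord_abs_le_dist {n : ℕ} (lam x : EuclideanSpace ℝ (Fin n)) (i : Fin n) :
    |lam i - x i| ≤ dist lam x := by
  rw [EuclideanSpace.dist_eq, ← Real.sqrt_sq_eq_abs]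
  apply Real.sqrt_le_sqrt
  rw [← sq_abs]
  have h : dist (lam i) (x i) ^ 2 ≤ ∑ j, dist (lam j) (x j) ^ 2 :=
    Finset.single_le_sum (f := fun j => dist (lam j) (x j) ^ 2)
      (fun j _ => sq_nonneg _) (Finset.mem_univ i)
  rwa [Real.dist_eq] at h

lemma grid_coord {n : ℕ} {eta : ℝ} {x : EuclideanSpace ℝ (Fin n)}
    (hx : x ∈ grid n 1 eta) (i : Fin n) : |x i| ≤ 1 := by
  obtain ⟨m, hm1, hm2⟩ := hx
  rw [hm1 i]
  rcases eq_or_ne ((gridSize n 1 eta : ℕ) : ℝ) 0 with h | h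
  · rw [h, div_zero, abs_zero]; exact zero_le_one
  · have hpos : (0:ℝ) < (gridSize n 1 eta : ℝ) :=
      lt_of_le_of_ne (Nat.cast_nonneg _) (Ne.symm h)
    rw [abs_div, abs_of_pos hpos, div_le_one hpos]
    have h2 := hm2 i
    rwa [one_mul] at h2

lemma expVal_sub {H : Type*} [NormedAddCommGroup H] [InnerProductSpace ℂ H]
    (T : H →L[ℂ] H) (v : H) (x : ℝ) (hv : ‖v‖ = 1) :
    |expVal T v - x| ≤ ‖T v - x • v‖ := by
  have h1 : (inner ℂ (T v - x • v) v : ℂ) = inner ℂ (T v) v - (x : ℂ) := by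
    rw [inner_sub_left]
    congr 1
    rw [RCLike.real_smul_eq_coe_smul (K := ℂ), inner_smul_left, inner_self_eq_norm_sq_to_K, hv]
    simp [Complex.conj_ofReal]
  have h2 : expVal T v - x = RCLike.re (inner ℂ (T v - x • v) v : ℂ) := by
    rw [h1, map_sub, expVal]
    simp
  rw [h2]
  calc |RCLike.re (inner ℂ (T v - x • v) v : ℂ)| ≤ ‖(inner ℂ (T v - x • v) v : ℂ)‖ :=
        RCLike.abs_re_le_norm _
    _ ≤ ‖T v - x • v‖ * ‖v‖ := norm_inner_le_norm _ _
    _ = ‖T v - x • v‖ := by rw [hv, mul_one]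

lemma nontrivial_of_infdim {H : Type} [NormedAddCommGroup H] [InnerProductSpace ℂ H]
    (hfd : ¬ FiniteDimensional ℂ H) : Nontrivial H := by
  by_contra hcon
  rw [not_nontrivial_iff_subsingleton] at hcon
  exact hfd inferInstance

theorem stmt0 (n : ℕ) (hn : 0 < n) (ε : ℝ) (hε : 0 < ε) :
    ∃ δ > 0, ∀ (H : Type) (_ : NormedAddCommGroup H) (_ : InnerProductSpace ℂ H)
      (_ : CompleteSpace H) (_ : TopologicalSpace.SeparableSpace H),
      ¬ FiniteDimensional ℂ H →
      ∀ T : Fin n → H →L[ℂ] H, (∀ i, IsSelfAdjoint (T i)) → (∀ i, ‖T i‖ ≤ 1) →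
      (∀ i j, ‖T i * T j - T j * T i‖ < δ) →
      ∀ lam ∈ sSp n 1 (ε / 4) T,
        ∃ v : H, ‖v‖ = 1 ∧ (∀ i, |expVal (T i) v - lam i| < ε) ∧ ∀ i, sd (T i) v < ε := by
  rcases le_or_gt 4 ε with hε4 | hε4
  · -- trivial case : ε ≥ 4
    refine ⟨1, one_pos, ?_⟩
    intro H _ _ _ _ hfd T hsa hTn hcomm lam hlam
    haveI : Nontrivial H := nontrivial_of_infdim hfd
    obtain ⟨w, hw⟩ := exists_ne (0 : H)
    have hwpos : 0 < ‖w‖ := norm_pos_iff.mpr hw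
    set v : H := ‖w‖⁻¹ • w with hvdef
    have hv : ‖v‖ = 1 := by
      rw [hvdef, norm_smul, Real.norm_eq_abs, abs_inv, abs_of_pos hwpos,
        inv_mul_cancel₀ hwpos.ne']
    obtain ⟨x, hxS, hball⟩ := Set.mem_iUnion₂.mp hlam
    obtain ⟨hxg, -⟩ := hxS
    have hx1 : ∀ i, |x i| ≤ 1 := grid_coord hxg
    have hlamx : ∀ i, |lam i - x i| ≤ ε / 4 :=
      fun i => (coord_abs_le_dist lam x i).trans (Metric.mem_closedBall.mp hball)
    have hTv : ∀ i, ‖T i v‖ ≤ 1 := by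
      intro i
      calc ‖T i v‖ ≤ ‖T i‖ * ‖v‖ := (T i).le_opNorm v
        _ ≤ 1 * 1 := mul_le_mul (hTn i) hv.le (norm_nonneg _) zero_le_one
        _ = 1 := one_mul _
    have hexp0 : ∀ i, |expVal (T i) v| ≤ 1 := by
      intro i
      have h := expVal_sub (T i) v 0 hv
      simp only [sub_zero, zero_smul] at h
      exact h.trans (hTv i)
    refine ⟨v, hv, fun i => ?_, fun i => ?_⟩
    · have h1 := hexp0 i
      have h3 : |lam i| ≤ 1 + ε / 4 := by
        have h4 := abs_sub_abs_le_abs_sub (lam i) (x i)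
        have h5 := hx1 i
        have h6 := hlamx i
        linarith
      calc |expVal (T i) v - lam i| ≤ |expVal (T i) v| + |lam i| := abs_sub _ _
        _ ≤ 1 + (1 + ε / 4) := add_le_add h1 h3
        _ < ε := by linarith
    · have h1 := hexp0 i
      calc sd (T i) v ≤ ‖T i v‖ + ‖expVal (T i) v • v‖ := norm_sub_le _ _
        _ = ‖T i v‖ + |expVal (T i) v| := by
            rw [norm_smul, Real.norm_eq_abs, hv, mul_one]
        _ ≤ 1 + 1 := add_le_add (hTv i) h1
        _ < ε := by linarith
  · -- main case : ε < 4
    set η : ℝ := ε / 4 with hηdef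
    have hη : 0 < η := by rw [hηdef]; linarith
    have hη1 : η < 1 := by rw [hηdef]; linarith
    set β : ℝ := (1 - η) / 2 with hβdef
    have hβ : 0 < β := by rw [hβdef]; linarith
    set γ₀ : ℝ := ε * β / (24 * n) with hγdef
    have hnR : (0:ℝ) < n := Nat.cast_pos.mpr hn
    have hγ₀ : 0 < γ₀ := by rw [hγdef]; positivity
    set ρ : ℝ := min 1 (γ₀ / 20) with hρdef
    have hρ0 : 0 < ρ := lt_min one_pos (by positivity)
    have hρ1 : ρ ≤ 1 := min_le_left _ _
    have hρ20 : ρ ≤ γ₀ / 20 := min_le_right _ _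
    obtain ⟨q1, hq1⟩ := exists_polynomial_near_of_continuousOn (-3) 3 (theta 0 (4 * η / 3))
      ((theta_continuous 0 (4 * η / 3)).continuousOn) ρ hρ0
    obtain ⟨q2, hq2⟩ := exists_polynomial_near_of_continuousOn (-3) 3 (theta 0 η)
      ((theta_continuous 0 η).continuousOn) ρ hρ0
    have hq1' : ∀ s ∈ Set.Icc (-3:ℝ) 3, |q1.eval s - theta 0 (4 * η / 3) s| ≤ ρ :=
      fun s hs => (hq1 s hs).le
    have hq2' : ∀ s ∈ Set.Icc (-3:ℝ) 3, |q2.eval s - theta 0 η s| ≤ ρ :=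
      fun s hs => (hq2 s hs).le
    obtain ⟨C1, hC1, hc1⟩ := aeval_comm_bound q1
    obtain ⟨C2, hC2, hc2⟩ := aeval_comm_bound q2
    set δ : ℝ := γ₀ / (2 * (C1 * C2 + 1)) with hδdef
    have hδ : 0 < δ := by rw [hδdef]; positivity
    refine ⟨δ, hδ, ?_⟩
    intro H _ _ _ _ hfd T hsa hTn hcomm lam hlam
    haveI : Nontrivial H := nontrivial_of_infdim hfd
    obtain ⟨x, hxS, hball⟩ := Set.mem_iUnion₂.mp hlam
    obtain ⟨hxg, hxn⟩ := hxS
    have hx1 : ∀ i, |x i| ≤ 1 := grid_coord hxg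
    have hx2 : ∀ i, |x i| ≤ 2 := fun i => (hx1 i).trans one_le_two
    have hlamx : ∀ i, |lam i - x i| ≤ η :=
      fun i => (coord_abs_le_dist lam x i).trans (Metric.mem_closedBall.mp hball)
    set pop : Fin n → (H →L[ℂ] H) := fun j => cfc (theta (x j) η) (T j) with hpopdef
    set φop : Fin n → (H →L[ℂ] H) := fun j => cfc (theta (x j) (4 * η / 3)) (T j) with hφdef
    have hγcomm : ∀ i j, ‖φop i * pop j - pop j * φop i‖ ≤ γ₀ := by
      intro i j
      have h := theta_comm_bound (A := H →L[ℂ] H) hρ0 hρ1 hq1' hq2' hC1 hC2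
        (hc1 (H →L[ℂ] H) inferInstance inferInstance) (hc2 (H →L[ℂ] H) inferInstance inferInstance)
        (hx2 i) (hx2 j) (hsa i) (hsa j) (hTn i) (hTn j)
      refine h.trans ?_
      have h2 : C1 * C2 * ‖T i * T j - T j * T i‖ ≤ C1 * C2 * δ :=
        mul_le_mul_of_nonneg_left (hcomm i j).le (by positivity)
      have h3 : C1 * C2 * δ ≤ γ₀ / 2 := by
        rw [hδdef, mul_div_assoc', div_le_div_iff₀ (by positivity) two_pos]
        nlinarith
      have h4 : 10 * ρ ≤ γ₀ / 2 := by linarith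
      linarith
    set P : H →L[ℂ] H := ThetaProd x η T with hPdef
    have hPdef' : P = (List.ofFn pop).prod := rfl
    have hlistb : ∀ i, ‖φop i * P - P‖ ≤ n * γ₀ := by
      intro i
      have h := list_absorb (A := H →L[ℂ] H) norm_one.le (φop i) hγ₀.le (List.ofFn pop)
        (by rintro z hz
            obtain ⟨j, rfl⟩ := List.mem_ofFn.mp hz
            exact norm_cfc_theta_le_one _ _ _)
        (by rintro z hz
            obtain ⟨j, rfl⟩ := List.mem_ofFn.mp hz
            exact hγcomm i j)
        ⟨pop i, List.mem_ofFn.mpr ⟨i, rfl⟩, cfc_theta_absorb hη (x i) (T i) (hsa i)⟩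
      rw [List.length_ofFn] at h
      rw [hPdef']
      exact h
    have hβP : β < ‖P‖ := by
      have : β < 1 - η := by rw [hβdef]; linarith
      exact this.trans_le hxn
    obtain ⟨u, hu1, hu2⟩ := P.exists_lt_apply_of_lt_opNorm hβP
    set v' : H := P u with hv'def
    have hv'pos : 0 < ‖v'‖ := hβ.trans hu2
    set v : H := ‖v'‖⁻¹ • v' with hvdef
    have hv : ‖v‖ = 1 := by
      rw [hvdef, norm_smul, Real.norm_eq_abs, abs_inv, abs_of_pos hv'pos,
        inv_mul_cancel₀ hv'pos.ne']
    have hgap : ∀ i, ‖φop i v' - v'‖ ≤ n * γ₀ := by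
      intro i
      have he : φop i v' - v' = (φop i * P - P) u := by
        simp [hv'def, ContinuousLinearMap.sub_apply, ContinuousLinearMap.mul_apply]
      rw [he]
      calc ‖(φop i * P - P) u‖ ≤ ‖φop i * P - P‖ * ‖u‖ := ContinuousLinearMap.le_opNorm _ _
        _ ≤ (n * γ₀) * 1 := mul_le_mul (hlistb i) hu1.le (norm_nonneg _) (by positivity)
        _ = n * γ₀ := mul_one _
    -- bounds on (T i - x i) v
    have hRiv : ∀ i, ‖(T i - algebraMap ℝ (H →L[ℂ] H) (x i)) v‖ ≤ 5 * ε / 12 := by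
      intro i
      set Ri : H →L[ℂ] H := T i - algebraMap ℝ (H →L[ℂ] H) (x i) with hRidef
      have hnRi : ‖Ri‖ ≤ 2 := by
        calc ‖Ri‖ ≤ ‖T i‖ + ‖algebraMap ℝ (H →L[ℂ] H) (x i)‖ := norm_sub_le _ _
          _ ≤ 1 + 1 := by
              apply add_le_add (hTn i)
              rw [norm_algebraMap', Real.norm_eq_abs]
              exact hx1 i
          _ = 2 := by norm_num
      have hRφ : ‖Ri * φop i‖ ≤ 4 * η / 3 :=
        cfc_dist_theta_le (by linarith) (x i) (T i) (hsa i)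
      have hsplit : Ri v' = (Ri * φop i) v' + Ri (v' - φop i v') := by
        simp [ContinuousLinearMap.mul_apply, map_sub]
      have hRv' : ‖Ri v'‖ ≤ (4 * η / 3) * ‖v'‖ + 2 * (n * γ₀) := by
        rw [hsplit]
        apply (norm_add_le _ _).trans
        apply add_le_add
        · calc ‖(Ri * φop i) v'‖ ≤ ‖Ri * φop i‖ * ‖v'‖ := ContinuousLinearMap.le_opNorm _ _
            _ ≤ (4 * η / 3) * ‖v'‖ := mul_le_mul_of_nonneg_right hRφ (norm_nonneg _)
        · calc ‖Ri (v' - φop i v')‖ ≤ ‖Ri‖ * ‖v' - φop i v'‖ := ContinuousLinearMap.le_opNorm _ _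
            _ ≤ 2 * (n * γ₀) := by
                apply mul_le_mul hnRi _ (norm_nonneg _) (by norm_num)
                rw [norm_sub_rev]
                exact hgap i
      have e1 : ‖Ri v‖ = ‖v'‖⁻¹ * ‖Ri v'‖ := by
        rw [hvdef, RCLike.real_smul_eq_coe_smul (K := ℂ), map_smul, norm_smul,
          RCLike.norm_ofReal, abs_inv, abs_of_pos hv'pos]
      have e2 : ‖v'‖⁻¹ * ‖Ri v'‖ ≤ ‖v'‖⁻¹ * ((4 * η / 3) * ‖v'‖ + 2 * (n * γ₀)) :=
        mul_le_mul_of_nonneg_left hRv' (by positivity)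
      have e3 : ‖v'‖⁻¹ * ((4 * η / 3) * ‖v'‖ + 2 * (n * γ₀))
          = 4 * η / 3 + (2 * (n * γ₀)) * ‖v'‖⁻¹ := by
        rw [mul_add, show ‖v'‖⁻¹ * (4 * η / 3 * ‖v'‖) = 4 * η / 3 from by
          field_simp [hv'pos.ne'], mul_comm (‖v'‖⁻¹)]
      have e4 : (2 * (n * γ₀)) * ‖v'‖⁻¹ ≤ (2 * (n * γ₀)) * β⁻¹ := by
        apply mul_le_mul_of_nonneg_left _ (by positivity)
        exact inv_anti₀ hβ hu2.le
      have e5 : 4 * η / 3 + (2 * (n * γ₀)) * β⁻¹ = 5 * ε / 12 := by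
        rw [hγdef, hηdef]
        field_simp
        ring
      linarith [e1, e2, e3, e4, e5]
    have hRivv : ∀ i, T i v - x i • v = (T i - algebraMap ℝ (H →L[ℂ] H) (x i)) v := by
      intro i
      have halg : (algebraMap ℝ (H →L[ℂ] H) (x i)) v = x i • v := by
        rw [Algebra.algebraMap_eq_smul_one]
        simp
      rw [ContinuousLinearMap.sub_apply, halg]
    have hexp : ∀ i, |expVal (T i) v - x i| ≤ 5 * ε / 12 := by
      intro i
      have h := expVal_sub (T i) v (x i) hv
      rw [hRivv i] at h
      exact h.trans (hRiv i)
    refine ⟨v, hv, fun i => ?_, fun i => ?_⟩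
    · have h1 := hexp i
      have h2 := hlamx i
      calc |expVal (T i) v - lam i| ≤ |expVal (T i) v - x i| + |x i - lam i| :=
            abs_sub_le _ _ _
        _ ≤ 5 * ε / 12 + η := add_le_add h1 (by rwa [abs_sub_comm] at h2)
        _ < ε := by rw [hηdef]; linarith
    · have h1 := hexp i
      have h2 := hRiv i
      have he : T i v - expVal (T i) v • v
          = (T i v - x i • v) + (x i - expVal (T i) v) • v := by
        rw [sub_smul]
        abel
      calc sd (T i) v = ‖T i v - expVal (T i) v • v‖ := rfl
        _ ≤ ‖T i v - x i • v‖ + ‖(x i - expVal (T i) v) • v‖ := by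
            rw [he]; exact norm_add_le _ _
        _ = ‖T i v - x i • v‖ + |x i - expVal (T i) v| := by
            rw [norm_smul, Real.norm_eq_abs, hv, mul_one]
        _ ≤ 5 * ε / 12 + 5 * ε / 12 := by
            apply add_le_add
            · rw [hRivv i]; exact h2
            · rw [abs_sub_comm]; exact h1
        _ < ε := by linarith
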